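/- Let G = {p ∈ P : p(0) = 1}. If a profile p ∈ G is written as a finite ℕ-linear combination p = ∑_{i=1}^{m} a_i • q_i with a_i ∈ ℕ and q_i ∈ P, then there exists an index i such that a_i = 1, q_i = p, and a_j • q_j = 0_P for all j ≠ i. Consequently, every subset S ⊆ P such that every profile is a finite ℕ-linear combination of elements of S must contain G; that is, G is the unique minimal generating set of P as an ℕ-semimodule. -/

import Mathlib

/-- A profile: a finitely supported sequence of naturals whose nonzero values
form an initial segment of `ℕ`. -/
def IsProfile (p : ℕ → ℕ) : Prop :=
  (∃ N, ∀ i, N ≤ i → p i = 0) ∧ (∀ i, p i = 0 → p (i + 1) = 0)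

/-- Pointwise sum of profiles. -/
def padd (p q : ℕ → ℕ) : ℕ → ℕ := fun i => p i + q i

/-- Product of profiles:
`(p × q)(i) = p(i)·∑_{j≤i} q(j) + q(i)·∑_{j≤i} p(j) − p(i)·q(i)`. -/
def pmul (p q : ℕ → ℕ) : ℕ → ℕ := fun i =>
  p i * (∑ j ∈ Finset.range (i + 1), q j) + q i * (∑ j ∈ Finset.range (i + 1), p j)
    - p i * q i

/-- The zero profile `0_P`. -/
def pzero : ℕ → ℕ := fun _ => 0

/-- The unit profile `1_P`. -/
def pone : ℕ → ℕ := fun i => if i = 0 then 1 else 0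

/-- Scalar multiple of a profile: `(n • p)(i) = n · p(i)`. -/
def psmul (n : ℕ) (p : ℕ → ℕ) : ℕ → ℕ := fun i => n * p i

/-- Any `ℕ`-linear combination of profiles equal to a profile `p` with
`p 0 = 1` must contain `p` itself with coefficient `1`, all its other terms
being null; consequently any generating set `S` of the profiles as an
`ℕ`-semimodule must contain every profile starting with `1`, i.e.
`G = {p ∈ P : p 0 = 1}` is the unique minimal generating set. -/

lemma profile_zero_of_zero {q : ℕ → ℕ} (hq : IsProfile q) (h0 : q 0 = 0) :
    ∀ k, q k = 0 := by
  intro k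
  induction k with
  | zero => exact h0
  | succ n ih => exact hq.2 n ih

lemma main_part :
    ∀ p : ℕ → ℕ, IsProfile p → p 0 = 1 →
      ∀ (m : ℕ) (a : Fin m → ℕ) (q : Fin m → (ℕ → ℕ)),
        (∀ i, IsProfile (q i)) →
        p = (fun k => ∑ i : Fin m, a i * q i k) →
        ∃ i : Fin m, a i = 1 ∧ q i = p ∧ ∀ j : Fin m, j ≠ i → psmul (a j) (q j) = pzero := by
  intro p hp hp0 m a q hq hsum
  have h1 : ∑ i : Fin m, a i * q i 0 = 1 := by
    have := congrFun hsum 0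
    rw [hp0] at this
    exact this.symm
  obtain ⟨i, hi⟩ : ∃ i, a i * q i 0 ≠ 0 := by
    by_contra h
    push_neg at h
    simp [h] at h1
  have hle : a i * q i 0 ≤ 1 :=
    h1 ▸ Finset.single_le_sum (fun j _ => Nat.zero_le (a j * q j 0)) (Finset.mem_univ i)
  have hi1 : a i * q i 0 = 1 := le_antisymm hle (Nat.one_le_iff_ne_zero.2 hi)
  have hrest : ∀ j : Fin m, j ≠ i → a j * q j 0 = 0 := by
    have hsplit := Finset.add_sum_erase Finset.univ (fun j => a j * q j 0) (Finset.mem_univ i)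
    rw [h1, hi1] at hsplit
    have hz : ∑ j ∈ Finset.univ.erase i, a j * q j 0 = 0 := by omega
    intro j hj
    have := (Finset.sum_eq_zero_iff).1 hz j (Finset.mem_erase.2 ⟨hj, Finset.mem_univ j⟩)
    exact this
  have hnull : ∀ j : Fin m, j ≠ i → ∀ k, a j * q j k = 0 := by
    intro j hj k
    rcases Nat.mul_eq_zero.1 (hrest j hj) with h | h
    · simp [h]
    · simp [profile_zero_of_zero (hq j) h k]
  have hai := Nat.eq_one_of_mul_eq_one_right hi1
  refine ⟨i, hai, ?_, ?_⟩
  · funext k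
    have := congrFun hsum k
    rw [this, Finset.sum_eq_single i (fun j _ hj => hnull j hj k) (by simp)]
    simp [hai]
  · intro j hj
    funext k
    simp [psmul, pzero, hnull j hj k]

/-- main -/
theorem unique_minimal_generating_set :
    (∀ p : ℕ → ℕ, IsProfile p → p 0 = 1 →
      ∀ (m : ℕ) (a : Fin m → ℕ) (q : Fin m → (ℕ → ℕ)),
        (∀ i, IsProfile (q i)) →
        p = (fun k => ∑ i : Fin m, a i * q i k) →
        ∃ i : Fin m, a i = 1 ∧ q i = p ∧ ∀ j : Fin m, j ≠ i → psmul (a j) (q j) = pzero) ∧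
    (∀ S : Set (ℕ → ℕ), (∀ s ∈ S, IsProfile s) →
      (∀ p : ℕ → ℕ, IsProfile p →
        ∃ (m : ℕ) (a : Fin m → ℕ) (q : Fin m → (ℕ → ℕ)),
          (∀ i, q i ∈ S) ∧ p = (fun k => ∑ i : Fin m, a i * q i k)) →
      ∀ g : ℕ → ℕ, IsProfile g → g 0 = 1 → g ∈ S) := by
  constructor
  · exact main_part
  · intro S hS hgen g hg hg0
    obtain ⟨m, a, q, hqS, hsum⟩ := hgen g hg
    obtain ⟨i, _, hqi, _⟩ := main_part g hg hg0 m a q (fun i => hS _ (hqS i)) hsum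
    exact hqi ▸ hqS i
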